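/- Let P = ∏_{i=1}^{2n-1} det L_i ∈ R. There exists an enumeration v_1, …, v_{n(n-1)} of the variables x_{ij}, y_{ij} (1 ≤ j < i ≤ n) such that every variable of V_i precedes every variable of V_j whenever i < j; and for any such enumeration, P has residual normal crossings with respect to the ordered variables v_1, …, v_{n(n-1)}. -/

import Mathlib

open MvPolynomial

/-- Index type for the variables `x_{rj}`, `y_{rj}` with `0 ≤ j < r < n` (0-indexed);
`false` tags an x-variable and `true` a y-variable. -/
def Vars (n : ℕ) : Type := {v : ℕ × ℕ // v.2 < v.1 ∧ v.1 < n} × Bool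

instance (n : ℕ) : DecidableEq (Vars n) := by unfold Vars; infer_instance

/-- The entry `x_{rj}` (`b = false`) or `y_{rj}` (`b = true`) (0-indexed), with the
conventions `x_{rr} = y_{rr} = 1` and `x_{rj} = y_{rj} = 0` for `r < j`. -/
noncomputable def ent (k : Type*) [Field k] (n r j : ℕ) (b : Bool) :
    MvPolynomial (Vars n) k :=
  if h : j < r ∧ r < n then X (⟨⟨(r, j), h.1, h.2⟩, b⟩ : Vars n)
  else if r = j then 1 else 0

/-- The entry of the `n × 2n` matrix `L` in row `r` and column `c` (0-indexed): the
columns alternate `x_{r0}, y_{r0}, x_{r1}, y_{r1}, …`. -/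
noncomputable def Lent (k : Type*) [Field k] (n r c : ℕ) : MvPolynomial (Vars n) k :=
  ent k n r (c / 2) (decide (c % 2 = 1))

/-- The size of the square matrix `L_i`, `1 ≤ i ≤ 2n-1`. -/
def sz (n i : ℕ) : ℕ := min i (2 * n - i)

/-- Row offset of `L_i` inside `L` (`n - i` for `i ≤ n` and `i - n` for `i ≥ n`). -/
def roff (n i : ℕ) : ℕ := (n - i) + (i - n)

/-- Column offset of `L_i` inside `L` (`0` for `i ≤ n` and `2(i-n)` for `i ≥ n`). -/
def coff (n i : ℕ) : ℕ := 2 * (i - n)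

/-- The matrix `L_i`: for `1 ≤ i ≤ n` the `i × i` submatrix of `L` on the last `i`
rows and the first `i` columns; for `n ≤ i ≤ 2n-1` the `(2n-i) × (2n-i)` submatrix
obtained from the first `i` columns of `L` by deleting the first `2(i-n)` columns
and the first `i - n` rows. -/
noncomputable def Lmat (k : Type*) [Field k] (n i : ℕ) :
    Matrix (Fin (sz n i)) (Fin (sz n i)) (MvPolynomial (Vars n) k) :=
  Matrix.of fun r c => Lent k n (roff n i + r.1) (coff n i + c.1)

/-- The determinant `det L_i`. -/
noncomputable def detL (k : Type*) [Field k] (n i : ℕ) : MvPolynomial (Vars n) k :=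
  (Lmat k n i).det

/-- The set `V_i` of variables appearing on the main diagonal of `L_i`. -/
def Vset (k : Type*) [Field k] (n i : ℕ) : Set (Vars n) :=
  {v | ∃ r : Fin (sz n i), Lmat k n i r r = X v}

/-- Residual normal crossings of a polynomial with respect to an ordered list of
variables: `f` has residual normal crossings w.r.t. the empty list if `f ≠ 0`, and
w.r.t. `z :: zs` if `z` divides `f` and the polynomial obtained from `f / z` by
substituting `z = 0` has residual normal crossings w.r.t. `zs`. -/
def ResidualNormalCrossings {k : Type*} [Field k] {σ : Type*} [DecidableEq σ] :
    List σ → MvPolynomial σ k → Prop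
  | [], f => f ≠ 0
  | z :: zs, f => ∃ g : MvPolynomial σ k, f = X z * g ∧
      ResidualNormalCrossings zs
        (aeval (fun w : σ => if w = z then (0 : MvPolynomial σ k) else X w) g)

/-- An enumeration `v` of the `n(n-1)` variables respects the order of the sets
`V_1, …, V_{2n-1}`: every variable of `V_i` precedes every variable of `V_j`
whenever `i < j`. -/
def RespectsVsets (k : Type*) [Field k] (n : ℕ) (v : Fin (n * (n - 1)) ≃ Vars n) : Prop :=
  ∀ i j : ℕ, 1 ≤ i → j ≤ 2 * n - 1 → i < j →
    ∀ a b : Fin (n * (n - 1)), v a ∈ Vset k n i → v b ∈ Vset k n j → a < b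

namespace RNCAux
instance instFTaux (n : ℕ) : Fintype {v : ℕ × ℕ // v.2 < v.1 ∧ v.1 < n} :=
  Fintype.ofFinset ((Finset.range n ×ˢ Finset.range n).filter fun p => p.2 < p.1)
    (by intro p
        simp only [Finset.mem_filter, Finset.mem_product, Finset.mem_range]
        exact ⟨fun h => ⟨h.2, h.1.1⟩, fun h => ⟨⟨h.2, lt_trans h.1 h.2⟩, h.1⟩⟩)
instance instFT (n : ℕ) : Fintype (Vars n) := by unfold Vars; infer_instance
variable {n : ℕ}
def idx (v : Vars n) : ℕ := n - v.1.1.1 + 2 * v.1.1.2 + v.2.toNat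
lemma idx_pos (v : Vars n) : 1 ≤ idx v := by
  obtain ⟨⟨⟨R, C⟩, hC, hR⟩, b⟩ := v
  simp only [idx]; omega
lemma idx_le (v : Vars n) : idx v ≤ 2 * n - 2 := by
  obtain ⟨⟨⟨R, C⟩, hC, hR⟩, b⟩ := v
  have : b.toNat ≤ 1 := Bool.toNat_le b
  simp only [idx]; omega
lemma exists_var (hn : 2 ≤ n) (m : ℕ) (h1 : 1 ≤ m) (h2 : m ≤ 2 * n - 2) :
    ∃ v : Vars n, idx v = m := by
  refine ⟨⟨⟨(n - 1, (m - 1) / 2), by omega, by omega⟩, decide ((m - 1) % 2 = 1)⟩, ?_⟩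
  simp only [idx]
  rcases Nat.mod_two_eq_zero_or_one (m - 1) with h | h <;> rw [h] <;> simp <;> omega
variable (k : Type*) [Field k]
lemma Lent_eq_X (R m : ℕ) (h1 : m / 2 < R) (h2 : R < n) :
    Lent k n R m = X (⟨⟨(R, m / 2), h1, h2⟩, decide (m % 2 = 1)⟩ : Vars n) := by
  simp only [Lent, ent, dif_pos (show m / 2 < R ∧ R < n from ⟨h1, h2⟩)]
  rfl
lemma Lent_eq_one (R m : ℕ) (h1 : R = m / 2) : Lent k n R m = 1 := by
  simp only [Lent, ent]
  rw [dif_neg (by omega), if_pos h1]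
lemma idx_mk (R m : ℕ) (h1 : m / 2 < R) (h2 : R < n) :
    idx (⟨⟨(R, m / 2), h1, h2⟩, decide (m % 2 = 1)⟩ : Vars n) = n - R + m := by
  simp only [idx]
  rcases Nat.mod_two_eq_zero_or_one m with h | h <;> rw [h] <;> simp <;> omega

-- entry lemmas
lemma Lmat_apply (i : ℕ) (r c : Fin (sz n i)) :
    Lmat k n i r c = Lent k n (roff n i + r.1) (coff n i + c.1) := rfl

lemma lower_entry (i : ℕ) (h1 : 1 ≤ i) (h2 : i ≤ 2 * n - 1) (r c : Fin (sz n i))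
    (hrc : c.1 < r.1) :
    ∃ v : Vars n, Lmat k n i r c = X v ∧ idx v < i := by
  have hb : r.1 < sz n i := r.2
  have hb2 : c.1 < sz n i := c.2
  have h1' : (coff n i + c.1) / 2 < roff n i + r.1 := by
    simp only [sz, roff, coff] at *; omega
  have h2' : roff n i + r.1 < n := by
    simp only [sz, roff, coff] at *; omega
  refine ⟨⟨⟨(roff n i + r.1, (coff n i + c.1) / 2), h1', h2'⟩,
      decide ((coff n i + c.1) % 2 = 1)⟩, ?_, ?_⟩
  · rw [Lmat_apply]; exact Lent_eq_X k _ _ h1' h2'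
  · rw [idx_mk _ _ h1' h2']
    simp only [sz, roff, coff] at *; omega

lemma diag_one (i : ℕ) (h1 : 1 ≤ i) (h2 : i ≤ 2 * n - 1) (r : Fin (sz n i))
    (hr : n ≤ i ∧ r.1 = 0) : Lmat k n i r r = 1 := by
  have hb : r.1 < sz n i := r.2
  rw [Lmat_apply]
  apply Lent_eq_one
  simp only [sz, roff, coff] at *; omega

lemma diag_pf (i : ℕ) (h1 : 1 ≤ i) (h2 : i ≤ 2 * n - 1) (r : Fin (sz n i))
    (hr : ¬(n ≤ i ∧ r.1 = 0)) :
    (coff n i + r.1) / 2 < roff n i + r.1 ∧ roff n i + r.1 < n ∧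
      n - (roff n i + r.1) + (coff n i + r.1) = i := by
  have hb : r.1 < sz n i := r.2
  simp only [sz, roff, coff] at *; omega

/-- the diagonal variable at a non-1 spot -/
noncomputable def dvar (i : ℕ) (h1 : 1 ≤ i) (h2 : i ≤ 2 * n - 1) (r : Fin (sz n i))
    (hr : ¬(n ≤ i ∧ r.1 = 0)) : Vars n :=
  ⟨⟨(roff n i + r.1, (coff n i + r.1) / 2), (diag_pf i h1 h2 r hr).1,
      (diag_pf i h1 h2 r hr).2.1⟩, decide ((coff n i + r.1) % 2 = 1)⟩

lemma diag_X (i : ℕ) (h1 : 1 ≤ i) (h2 : i ≤ 2 * n - 1) (r : Fin (sz n i))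
    (hr : ¬(n ≤ i ∧ r.1 = 0)) :
    Lmat k n i r r = X (dvar i h1 h2 r hr) ∧ idx (dvar i h1 h2 r hr) = i := by
  obtain ⟨p1, p2, p3⟩ := diag_pf i h1 h2 r hr
  constructor
  · rw [Lmat_apply]; exact Lent_eq_X k _ _ p1 p2
  · rw [dvar, idx_mk _ _ p1 p2]; exact p3

lemma diag_of_idx (i : ℕ) (h1 : 1 ≤ i) (h2 : i ≤ 2 * n - 1) (v : Vars n)
    (hv : idx v = i) :
    ∃ (r : Fin (sz n i)) (hr : ¬(n ≤ i ∧ r.1 = 0)), dvar i h1 h2 r hr = v := by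
  obtain ⟨⟨⟨R, C⟩, hC, hR⟩, b⟩ := v
  have ht : b.toNat ≤ 1 := Bool.toNat_le b
  simp only [idx] at hv
  have hb1 : R - roff n i < sz n i := by simp only [sz, roff]; omega
  have hb2 : ¬(n ≤ i ∧ R - roff n i = 0) := by simp only [roff]; omega
  refine ⟨⟨R - roff n i, hb1⟩, hb2, ?_⟩
  have hRR : roff n i + (R - roff n i) = R := by simp only [roff]; omega
  have hm : coff n i + (R - roff n i) = 2 * C + b.toNat := by
    simp only [roff, coff] at *; omega
  have hdiv : (coff n i + (R - roff n i)) / 2 = C := by omega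
  have hmod : decide ((coff n i + (R - roff n i)) % 2 = 1) = b := by
    cases b
    · have : (coff n i + (R - roff n i)) % 2 = 0 := by simp at hm; omega
      rw [this]; rfl
    · have : (coff n i + (R - roff n i)) % 2 = 1 := by simp at hm; omega
      rw [this]; rfl
  simp only [dvar]
  simp only [hdiv, hmod]
  exact Prod.ext (Subtype.ext (Prod.ext hRR rfl)) rfl

lemma dvar_inj (i : ℕ) (h1 : 1 ≤ i) (h2 : i ≤ 2 * n - 1) (r r' : Fin (sz n i))
    (hr : ¬(n ≤ i ∧ r.1 = 0)) (hr' : ¬(n ≤ i ∧ r'.1 = 0))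
    (h : dvar i h1 h2 r hr = dvar i h1 h2 r' hr') : r = r' := by
  have := congrArg (fun v : Vars n => v.1.1.1) h
  simp only [dvar] at this
  exact Fin.ext (by omega)


lemma aeval_detL (i : ℕ) (h1 : 1 ≤ i) (h2 : i ≤ 2 * n - 1)
    (f : Vars n → MvPolynomial (Vars n) k)
    (hf0 : ∀ w : Vars n, idx w < i → f w = 0)
    (hfX : ∀ w : Vars n, idx w = i → f w = X w) :
    aeval f (detL k n i) =
      ∏ v ∈ Finset.univ.filter (fun v : Vars n => idx v = i), X v := by
  have hdet : aeval f (detL k n i) = ((Lmat k n i).map (aeval f)).det :=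
    AlgHom.map_det _ _
  have htri : ((Lmat k n i).map (aeval f)).BlockTriangular id := by
    intro r c hlt
    obtain ⟨v, hv, hvi⟩ := lower_entry k i h1 h2 r c hlt
    simp [Matrix.map_apply, hv, hf0 v hvi]
  rw [hdet, Matrix.det_of_upperTriangular htri]
  rw [← Finset.prod_filter_mul_prod_filter_not Finset.univ
    (fun r : Fin (sz n i) => ¬(n ≤ i ∧ r.1 = 0))]
  have h2nd : ∏ r ∈ Finset.univ.filter
      (fun r : Fin (sz n i) => ¬¬(n ≤ i ∧ r.1 = 0)),
      ((Lmat k n i).map (aeval f)) r r = 1 := by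
    apply Finset.prod_eq_one
    intro r hr
    rw [Finset.mem_filter] at hr
    have h := diag_one k i h1 h2 r (not_not.1 hr.2)
    simp [Matrix.map_apply, h]
  rw [h2nd, mul_one]
  refine Finset.prod_bij
    (fun r hr => dvar i h1 h2 r (Finset.mem_filter.1 hr).2) ?_ ?_ ?_ ?_
  · intro r hr
    rw [Finset.mem_filter]
    exact ⟨Finset.mem_univ _, (diag_X k i h1 h2 r _).2⟩
  · intro r hr r' hr' h
    exact dvar_inj i h1 h2 r r' _ _ h
  · intro v hv
    obtain ⟨r, hr, hrv⟩ := diag_of_idx i h1 h2 v (Finset.mem_filter.1 hv).2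
    exact ⟨r, Finset.mem_filter.2 ⟨Finset.mem_univ _, hr⟩, hrv⟩
  · intro r hr
    obtain ⟨hX, hidx⟩ := diag_X k i h1 h2 r (Finset.mem_filter.1 hr).2
    rw [Matrix.map_apply, hX, aeval_X, hfX _ hidx]

lemma mem_Vset_iff (i : ℕ) (h1 : 1 ≤ i) (h2 : i ≤ 2 * n - 1) (v : Vars n) :
    v ∈ Vset k n i ↔ idx v = i := by
  constructor
  · rintro ⟨r, hr⟩
    by_cases hone : n ≤ i ∧ r.1 = 0
    · rw [diag_one k i h1 h2 r hone] at hr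
      have := congrArg MvPolynomial.constantCoeff hr
      simp at this
    · obtain ⟨hX, hidx⟩ := diag_X k i h1 h2 r hone
      rw [hX] at hr
      rwa [MvPolynomial.X_injective hr] at hidx
  · intro hv
    obtain ⟨r, hr, hrv⟩ := diag_of_idx i h1 h2 v hv
    exact ⟨r, by rw [(diag_X k i h1 h2 r hr).1, hrv]⟩


/-- the invariant polynomial at stage `i` with remaining variable list `zs` -/
noncomputable def QQ (i : ℕ) (zs : List (Vars n)) : MvPolynomial (Vars n) k :=
  (∏ v ∈ Finset.univ.filter (fun v : Vars n => idx v = i ∧ v ∈ zs), X v) *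
  ∏ j ∈ Finset.Icc (i + 1) (2 * n - 1),
    aeval (fun w : Vars n =>
      if idx w < i ∨ (idx w = i ∧ w ∉ zs) then (0 : MvPolynomial (Vars n) k) else X w)
      (detL k n j)

lemma aeval_zero_comp (P Q : Vars n → Prop) [DecidablePred P] [DecidablePred Q]
    (z : Vars n) (hPQ : ∀ w, P w ∨ w = z ↔ Q w) (p : MvPolynomial (Vars n) k) :
    aeval (fun w : Vars n => if w = z then (0 : MvPolynomial (Vars n) k) else X w)
      (aeval (fun w : Vars n => if P w then (0 : MvPolynomial (Vars n) k) else X w) p) =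
    aeval (fun w : Vars n => if Q w then (0 : MvPolynomial (Vars n) k) else X w) p := by
  rw [← AlgHom.comp_apply, MvPolynomial.comp_aeval]
  refine AlgHom.congr_fun (MvPolynomial.algHom_ext fun w => ?_) p
  rw [aeval_X, aeval_X]
  by_cases hP : P w
  · rw [if_pos hP, map_zero, if_pos ((hPQ w).1 (Or.inl hP))]
  · rw [if_neg hP, aeval_X]
    by_cases hz : w = z
    · rw [if_pos hz, if_pos ((hPQ w).1 (Or.inr hz))]
    · rw [if_neg hz, if_neg (fun hQ => (((hPQ w).2 hQ).elim hP hz))]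

lemma inv_main (hn : 2 ≤ n) (zs : List (Vars n)) :
    ∀ i : ℕ, 1 ≤ i → i ≤ 2 * n - 1 →
    List.Pairwise (fun a b : Vars n => idx a ≤ idx b) zs → zs.Nodup →
    (∀ v ∈ zs, i ≤ idx v) → (∀ v : Vars n, i < idx v → v ∈ zs) →
    ResidualNormalCrossings zs (QQ k i zs) := by
  induction zs with
  | nil =>
    intro i h1 h2 _ _ _ hsup
    have hi : 2 * n - 2 ≤ i := by
      by_contra hc
      push_neg at hc
      obtain ⟨v, hv⟩ := exists_var hn (i + 1) (by omega) (by omega)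
      exact absurd (hsup v (by omega)) List.not_mem_nil
    show QQ k i [] ≠ 0
    have hfil : (Finset.univ.filter
        (fun v : Vars n => idx v = i ∧ v ∈ ([] : List (Vars n)))) = ∅ := by
      apply Finset.filter_false_of_mem; intro v _; simp
    rw [QQ, hfil, Finset.prod_empty, one_mul]
    rcases (show i = 2 * n - 2 ∨ i = 2 * n - 1 by omega) with h | h
    · subst h
      have hicc : Finset.Icc (2 * n - 2 + 1) (2 * n - 1) = {2 * n - 1} := by
        have : 2 * n - 2 + 1 = 2 * n - 1 := by omega
        rw [this, Finset.Icc_self]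
      rw [hicc, Finset.prod_singleton]
      rw [aeval_detL k (2 * n - 1) (by omega) le_rfl _ ?_ ?_]
      · have : (Finset.univ.filter (fun v : Vars n => idx v = 2 * n - 1)) = ∅ := by
          apply Finset.filter_false_of_mem
          intro v _
          have := idx_le v; omega
        rw [this, Finset.prod_empty]
        exact one_ne_zero
      · intro w hw
        rw [if_pos]
        have := idx_le w
        rcases Nat.lt_or_ge (idx w) (2 * n - 2) with h' | h'
        · exact Or.inl h'
        · exact Or.inr ⟨by omega, by simp⟩
      · intro w hw
        exact absurd (idx_le w) (by omega)
    · subst h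
      rw [Finset.Icc_eq_empty (by omega), Finset.prod_empty]
      exact one_ne_zero
  | cons z rest IH =>
    intro i h1 h2 hsort hnd hlow hsup
    have hall : ∀ v ∈ rest, idx z ≤ idx v := (List.pairwise_cons.1 hsort).1
    have hndz : z ∉ rest := (List.nodup_cons.1 hnd).1
    have hndr : rest.Nodup := (List.nodup_cons.1 hnd).2
    have hsr : List.Pairwise (fun a b : Vars n => idx a ≤ idx b) rest :=
      (List.pairwise_cons.1 hsort).2
    have hzi : i ≤ idx z := hlow z List.mem_cons_self
    have caseA : ∀ i', idx z = i' → 1 ≤ i' → i' ≤ 2 * n - 1 →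
        (∀ v : Vars n, i' < idx v → v ∈ z :: rest) →
        ResidualNormalCrossings (z :: rest) (QQ k i' (z :: rest)) := by
      intro i' hzi' h1' h2' hsup'
      refine ⟨(∏ v ∈ Finset.univ.filter (fun v : Vars n => idx v = i' ∧ v ∈ rest), X v) *
        ∏ j ∈ Finset.Icc (i' + 1) (2 * n - 1),
          aeval (fun w : Vars n =>
            if idx w < i' ∨ (idx w = i' ∧ w ∉ z :: rest) then (0 : MvPolynomial (Vars n) k)
            else X w) (detL k n j), ?_, ?_⟩
      · rw [QQ]
        have hins : Finset.univ.filter (fun v : Vars n => idx v = i' ∧ v ∈ z :: rest) =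
            insert z (Finset.univ.filter (fun v : Vars n => idx v = i' ∧ v ∈ rest)) := by
          ext v
          simp only [Finset.mem_filter, Finset.mem_insert, Finset.mem_univ, true_and,
            List.mem_cons]
          constructor
          · rintro ⟨hv1, hv2 | hv2⟩
            · exact Or.inl hv2
            · exact Or.inr ⟨hv1, hv2⟩
          · rintro (rfl | ⟨hv1, hv2⟩)
            · exact ⟨hzi', Or.inl rfl⟩
            · exact ⟨hv1, Or.inr hv2⟩
        rw [hins, Finset.prod_insert (by simp [hndz]), mul_assoc]
      · rw [map_mul]
        have e1 : aeval (R := k) (fun w : Vars n => if w = z then (0 : MvPolynomial (Vars n) k) else X w)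
            (∏ v ∈ Finset.univ.filter (fun v : Vars n => idx v = i' ∧ v ∈ rest), X v) =
            ∏ v ∈ Finset.univ.filter (fun v : Vars n => idx v = i' ∧ v ∈ rest), X v := by
          rw [map_prod]
          apply Finset.prod_congr rfl
          intro v hv
          rw [Finset.mem_filter] at hv
          rw [aeval_X, if_neg (fun h : v = z => hndz (h ▸ hv.2.2))]
        have e2 : aeval (R := k) (fun w : Vars n => if w = z then (0 : MvPolynomial (Vars n) k) else X w)
            (∏ j ∈ Finset.Icc (i' + 1) (2 * n - 1),
              aeval (fun w : Vars n =>
                if idx w < i' ∨ (idx w = i' ∧ w ∉ z :: rest) then (0 : MvPolynomial (Vars n) k)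
                else X w) (detL k n j)) =
            ∏ j ∈ Finset.Icc (i' + 1) (2 * n - 1),
              aeval (fun w : Vars n =>
                if idx w < i' ∨ (idx w = i' ∧ w ∉ rest) then (0 : MvPolynomial (Vars n) k)
                else X w) (detL k n j) := by
          rw [map_prod]
          apply Finset.prod_congr rfl
          intro j _
          apply aeval_zero_comp
          intro w
          constructor
          · rintro ((hw | ⟨hw1, hw2⟩) | rfl)
            · exact Or.inl hw
            · exact Or.inr ⟨hw1, fun hr => hw2 (List.mem_cons_of_mem _ hr)⟩
            · exact Or.inr ⟨hzi', hndz⟩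
          · rintro (hw | ⟨hw1, hw2⟩)
            · exact Or.inl (Or.inl hw)
            · by_cases hz : w = z
              · exact Or.inr hz
              · exact Or.inl (Or.inr ⟨hw1, fun hmem =>
                  (List.mem_cons.1 hmem).elim hz hw2⟩)
        rw [e1, e2]
        exact IH i' h1' h2' hsr hndr (fun v hv => hzi' ▸ hall v hv)
          (fun v hv => (List.mem_cons.1 (hsup' v hv)).resolve_left
            (fun hvz => by rw [hvz] at hv; omega))
    rcases eq_or_lt_of_le hzi with hEq | hlt
    · exact caseA i hEq.symm h1 h2 hsup
    · have hle2 : idx z ≤ 2 * n - 2 := idx_le z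
      have hz1 : idx z = i + 1 := by
        by_contra hc
        obtain ⟨v, hv⟩ := exists_var hn (i + 1) (by omega) (by omega)
        have hm := hsup v (by omega)
        rcases List.mem_cons.1 hm with h | hm'
        · rw [h] at hv; exact hc hv
        · have := hall v hm'; omega
      have hfil0 : Finset.univ.filter (fun v : Vars n => idx v = i ∧ v ∈ z :: rest) = ∅ := by
        apply Finset.filter_false_of_mem
        intro v _
        rintro ⟨hv1, hv2⟩
        rcases List.mem_cons.1 hv2 with h | hv3
        · rw [h] at hv1; omega
        · have := hall v hv3; omega
      have hicc : Finset.Icc (i + 1) (2 * n - 1) =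
          insert (i + 1) (Finset.Icc (i + 2) (2 * n - 1)) := by
        ext x; simp only [Finset.mem_Icc, Finset.mem_insert]; omega
      have hnotmem : (i + 1) ∉ Finset.Icc (i + 2) (2 * n - 1) := by
        simp only [Finset.mem_Icc]; omega
      have hfun : (fun w : Vars n =>
            if idx w < i ∨ (idx w = i ∧ w ∉ z :: rest) then (0 : MvPolynomial (Vars n) k)
            else X w) =
          (fun w : Vars n =>
            if idx w < i + 1 ∨ (idx w = i + 1 ∧ w ∉ z :: rest) then (0 : MvPolynomial (Vars n) k)
            else X w) := by
        funext w
        refine if_congr ?_ rfl rfl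
        constructor
        · rintro (h | ⟨h1', h2'⟩)
          · exact Or.inl (by omega)
          · exact Or.inl (by omega)
        · rintro (h | ⟨h1', h2'⟩)
          · rcases Nat.lt_or_ge (idx w) i with h' | h'
            · exact Or.inl h'
            · have hwi : idx w = i := by omega
              refine Or.inr ⟨hwi, fun hmem => ?_⟩
              rcases List.mem_cons.1 hmem with hh | hmem'
              · rw [hh] at hwi; omega
              · have := hall w hmem'; omega
          · exact absurd (hsup w (by omega)) h2'
      have hkey : QQ k i (z :: rest) = QQ k (i + 1) (z :: rest) := by
        rw [QQ, QQ, hfil0, Finset.prod_empty, one_mul, hfun, hicc,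
          Finset.prod_insert hnotmem]
        congr 1
        rw [aeval_detL k (i + 1) (by omega) (by omega) _
          (fun w hw => if_pos (Or.inl hw))
          (fun w (hw : idx w = i + 1) => if_neg (fun hc => hc.elim (fun h' => by omega)
            (fun h' => h'.2 (hsup w (by omega)))))]
        refine Finset.prod_congr ?_ (fun _ _ => rfl)
        ext v
        simp only [Finset.mem_filter, Finset.mem_univ, true_and]
        exact ⟨fun hv => ⟨hv, hsup v (by omega)⟩, fun hv => hv.1⟩
      rw [hkey]
      exact caseA (i + 1) hz1 (by omega) (by omega) (fun v hv => hsup v (by omega))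


def varsEquiv (n : ℕ) : Vars n ≃ (Σ r : Fin n, Fin r.1) × Bool where
  toFun v := (⟨⟨v.1.1.1, v.1.2.2⟩, ⟨v.1.1.2, v.1.2.1⟩⟩, v.2)
  invFun p := (⟨(p.1.1.1, p.1.2.1), p.1.2.2, p.1.1.2⟩, p.2)
  left_inv v := rfl
  right_inv p := rfl

lemma card_vars (n : ℕ) : Fintype.card (Vars n) = n * (n - 1) := by
  rw [Fintype.card_congr (varsEquiv n), Fintype.card_prod, Fintype.card_bool,
    Fintype.card_sigma]
  simp only [Fintype.card_fin]
  have hs : (∑ x : Fin n, (x : ℕ)) = ∑ i ∈ Finset.range n, i :=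
    Fin.sum_univ_eq_sum_range (fun i => i) n
  rw [hs]
  exact Finset.sum_range_id_mul_two n

end RNCAux

/-- There exists an enumeration `v₁, …, v_{n(n-1)}` of the variables `x_{rj}, y_{rj}`
in which every variable of `V_i` precedes every variable of `V_j` whenever `i < j`,
and for any such enumeration the product `P = ∏_{i=1}^{2n-1} det L_i` has residual
normal crossings with respect to the ordered variables `v₁, …, v_{n(n-1)}`. -/
theorem prod_detL_residual_normal_crossings
    (k : Type*) [Field k] (n : ℕ) (hn : 2 ≤ n) :
    (∃ v : Fin (n * (n - 1)) ≃ Vars n, RespectsVsets k n v) ∧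
    (∀ v : Fin (n * (n - 1)) ≃ Vars n, RespectsVsets k n v →
      ResidualNormalCrossings (List.ofFn fun a => v a)
        (∏ i ∈ Finset.Icc 1 (2 * n - 1), detL k n i)) := by
  constructor
  · have hcard : Fintype.card (Vars n) = n * (n - 1) := RNCAux.card_vars n
    let e : Fin (n * (n - 1)) ≃ Vars n := (Fintype.equivFinOfCardEq hcard).symm
    refine ⟨(Tuple.sort (fun a => RNCAux.idx (e a))).trans e, ?_⟩
    intro i j h1i h2j hij a b ha hb
    have hmono := Tuple.monotone_sort (fun a => RNCAux.idx (e a))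
    rw [Equiv.trans_apply] at ha hb
    rw [RNCAux.mem_Vset_iff k i h1i (by omega) _] at ha
    rw [RNCAux.mem_Vset_iff k j (by omega) h2j _] at hb
    by_contra hab
    push_neg at hab
    have hm := hmono hab
    simp only [Function.comp] at hm
    omega
  · intro v hv
    set zs := List.ofFn (fun a => v a) with hzs
    have hmem : ∀ w : Vars n, w ∈ zs := fun w =>
      List.mem_ofFn.2 ⟨v.symm w, by simp⟩
    have hsorted : List.Pairwise (fun a b : Vars n => RNCAux.idx a ≤ RNCAux.idx b) zs := by
      rw [hzs, List.pairwise_ofFn]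
      intro a b hab
      by_contra hc
      push_neg at hc
      have hba := hv (RNCAux.idx (v b)) (RNCAux.idx (v a)) (RNCAux.idx_pos _)
        (le_trans (RNCAux.idx_le _) (by omega)) hc b a
        ((RNCAux.mem_Vset_iff k _ (RNCAux.idx_pos _)
          (le_trans (RNCAux.idx_le _) (by omega)) _).2 rfl)
        ((RNCAux.mem_Vset_iff k _ (RNCAux.idx_pos _)
          (le_trans (RNCAux.idx_le _) (by omega)) _).2 rfl)
      exact absurd hba (not_lt.2 hab.le)
    have hnd : zs.Nodup := List.nodup_ofFn.2 (Equiv.injective v)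
    have h := RNCAux.inv_main k hn zs 1 le_rfl (by omega) hsorted hnd
      (fun w _ => RNCAux.idx_pos w) (fun w _ => hmem w)
    have hQQ : RNCAux.QQ k 1 zs = ∏ i ∈ Finset.Icc 1 (2 * n - 1), detL k n i := by
      rw [RNCAux.QQ]
      have hfun : (fun w : Vars n =>
          if RNCAux.idx w < 1 ∨ (RNCAux.idx w = 1 ∧ w ∉ zs) then (0 : MvPolynomial (Vars n) k)
          else X w) = X := by
        funext w
        rw [if_neg]
        rintro (h' | h')
        · exact absurd (RNCAux.idx_pos w) (by omega)
        · exact h'.2 (hmem w)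
      rw [hfun]
      have hset : Finset.univ.filter (fun v : Vars n => RNCAux.idx v = 1 ∧ v ∈ zs) =
          Finset.univ.filter (fun v : Vars n => RNCAux.idx v = 1) := by
        ext w; simp only [Finset.mem_filter, Finset.mem_univ, true_and]
        exact ⟨fun h' => h'.1, fun h' => ⟨h', hmem w⟩⟩
      rw [hset]
      have hd1 : (∏ u ∈ Finset.univ.filter (fun u : Vars n => RNCAux.idx u = 1), X u) =
          detL k n 1 := by
        have h2 := RNCAux.aeval_detL (n := n) k 1 le_rfl (by omega) X
          (fun w hw => absurd (RNCAux.idx_pos w) (by omega)) (fun w _ => rfl)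
        rw [aeval_X_left_apply] at h2
        exact h2.symm
      rw [hd1]
      have hicc : Finset.Icc 1 (2 * n - 1) = insert 1 (Finset.Icc 2 (2 * n - 1)) := by
        ext x; simp only [Finset.mem_Icc, Finset.mem_insert]; omega
      rw [hicc, Finset.prod_insert (by simp only [Finset.mem_Icc]; omega)]
      refine congrArg _ (Finset.prod_congr rfl fun j _ => aeval_X_left_apply _)
    rw [← hQQ]
    exact h
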